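/- Under the hypotheses of the integral representation λ ln J(y,t) = ∫_{−∞}^{y} ρ₀(y')( u(y',t) − u(y',0) ) dy' + ∫₀ᵗ ( P(y,τ) + |h(y,τ)|²/(8π) ) dτ, assume in addition that ρ₀ ≥ 0 is integrable on ℝ with ∫_ℝ ρ₀ dy = m, that P ≥ 0 everywhere, and that there exists E₀ ≥ 0 with ∫_ℝ ρ₀(y) u(y,t)² dy ≤ 2E₀ for all t ∈ [0,T] (in particular at t = 0, ∫_ℝ ρ₀ u(·,0)² dy ≤ 2E₀). Then for all (y,t) ∈ ℝ × [0,T]: J(y,t) ≥ exp( −(2√2/λ) √(m E₀) ). -/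

import Mathlib

open Real MeasureTheory
open scoped InnerProductSpace

noncomputable section

abbrev E2 := EuclideanSpace ℝ (Fin 2)

/-- Partial derivative in time of a scalar field `f = f(y, t)`. -/
def pdt (f : ℝ → ℝ → ℝ) (y t : ℝ) : ℝ := deriv (fun s => f y s) t

/-- Partial derivative in space of a scalar field `f = f(y, t)`. -/
def pdy (f : ℝ → ℝ → ℝ) (y t : ℝ) : ℝ := deriv (fun z => f z t) y

/-- Partial derivative in time of an `ℝ²`-valued field. -/
def pdtV (f : ℝ → ℝ → E2) (y t : ℝ) : E2 := deriv (fun s => f y s) t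

/-- Partial derivative in space of an `ℝ²`-valued field. -/
def pdyV (f : ℝ → ℝ → E2) (y t : ℝ) : E2 := deriv (fun z => f z t) y


lemma aux_eps (a b C : ℝ) (ha : 0 ≤ a) (hb : 0 ≤ b)
    (h : ∀ ε > (0:ℝ), C ≤ ε * a + b / ε) : C ≤ 2 * Real.sqrt (a * b) := by
  rcases ha.eq_or_lt with ha0 | ha0
  · have : C ≤ 0 := by
      refine le_of_forall_pos_le_add ?_
      intro ε hε
      have hεp : (0:ℝ) < b / ε + 1 := by positivity
      have := h (b / ε + 1) hεp
      rw [← ha0] at this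
      have hle : b / (b / ε + 1) ≤ ε := by
        rw [div_le_iff₀ hεp]
        have : ε * (b / ε) = b := by field_simp
        nlinarith
      linarith
    calc C ≤ 0 := this
      _ ≤ _ := by positivity
  rcases hb.eq_or_lt with hb0 | hb0
  · have : C ≤ 0 := by
      refine le_of_forall_pos_le_add ?_
      intro ε hε
      have hεp : (0:ℝ) < ε / (a + 1) := by positivity
      have := h _ hεp
      rw [← hb0] at this
      have : C ≤ ε / (a + 1) * a := by
        simpa using this
      have hle : ε / (a + 1) * a ≤ ε := by
        rw [div_mul_eq_mul_div, div_le_iff₀ (by linarith)]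
        nlinarith
      linarith
    calc C ≤ 0 := this
      _ ≤ _ := by positivity
  · set s := Real.sqrt a
    set t := Real.sqrt b
    have hs : 0 < s := Real.sqrt_pos.2 ha0
    have ht : 0 < t := Real.sqrt_pos.2 hb0
    have hsa : s ^ 2 = a := Real.sq_sqrt ha0.le
    have htb : t ^ 2 = b := Real.sq_sqrt hb0.le
    have hε : (0:ℝ) < t / s := by positivity
    have := h _ hε
    have hab : Real.sqrt (a * b) = s * t := by
      rw [Real.sqrt_mul ha0.le]
    have h1 : t / s * a = s * t := by
      rw [← hsa]; field_simp
    have h2 : b / (t / s) = s * t := by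
      rw [← htb]; field_simp
    rw [h1, h2] at this
    rw [hab]
    linarith

theorem stmt_15 (T lam m E₀ : ℝ) (hT : 0 ≤ T) (hlam : 0 < lam) (hE : 0 ≤ E₀)
    (ρ₀ : ℝ → ℝ) (J u P : ℝ → ℝ → ℝ) (h : ℝ → ℝ → E2)
    (hJpos : ∀ y : ℝ, ∀ t ∈ Set.Icc (0 : ℝ) T, 0 < J y t)
    (hρnn : ∀ y : ℝ, 0 ≤ ρ₀ y)
    (hρint : MeasureTheory.Integrable ρ₀)
    (hm : ∫ y : ℝ, ρ₀ y = m)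
    (hPnn : ∀ y : ℝ, ∀ t ∈ Set.Icc (0 : ℝ) T, 0 ≤ P y t)
    (hu2int : ∀ t ∈ Set.Icc (0 : ℝ) T,
      MeasureTheory.Integrable (fun y => ρ₀ y * (u y t) ^ 2))
    (hu2 : ∀ t ∈ Set.Icc (0 : ℝ) T, ∫ y : ℝ, ρ₀ y * (u y t) ^ 2 ≤ 2 * E₀)
    (hint1 : ∀ t ∈ Set.Icc (0 : ℝ) T, ∀ y : ℝ,
      MeasureTheory.IntegrableOn (fun y' => ρ₀ y' * (u y' t - u y' 0)) (Set.Iic y))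
    (hrep : ∀ y : ℝ, ∀ t ∈ Set.Icc (0 : ℝ) T,
      lam * Real.log (J y t)
        = (∫ y' in Set.Iic y, ρ₀ y' * (u y' t - u y' 0))
          + ∫ τ in (0:ℝ)..t, (P y τ + ‖h y τ‖ ^ 2 / (8 * π))) :
    ∀ y : ℝ, ∀ t ∈ Set.Icc (0 : ℝ) T,
      Real.exp (-(2 * Real.sqrt 2 / lam) * Real.sqrt (m * E₀)) ≤ J y t := by
  intro y t ht
  have ht0 : (0:ℝ) ∈ Set.Icc (0:ℝ) T := ⟨le_refl 0, hT⟩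
  have hm0 : 0 ≤ m := hm ▸ integral_nonneg hρnn
  -- the time integral is nonnegative
  have hI2 : 0 ≤ ∫ τ in (0:ℝ)..t, (P y τ + ‖h y τ‖ ^ 2 / (8 * π)) := by
    apply intervalIntegral.integral_nonneg ht.1
    intro τ hτ
    have hτT : τ ∈ Set.Icc (0:ℝ) T := ⟨hτ.1, hτ.2.trans ht.2⟩
    have := hPnn y τ hτT
    have hpi : (0:ℝ) < 8 * π := by positivity
    positivity
  -- bound on the space integral
  set f : ℝ → ℝ := fun y' => ρ₀ y' * (u y' t - u y' 0) with hf
  set C : ℝ := ∫ y' in Set.Iic y, |f y'| with hC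
  have hfi := hint1 t ht y
  have habs : |∫ y' in Set.Iic y, f y'| ≤ C := by
    simpa [hC] using (norm_integral_le_integral_norm (μ := volume.restrict (Set.Iic y)) f)
  have hCbound : C ≤ 2 * Real.sqrt (m / 2 * (4 * E₀)) := by
    apply aux_eps _ _ _ (by linarith) (by positivity)
    intro ε hε
    set g : ℝ → ℝ := fun x =>
      ε / 2 * ρ₀ x + 1 / ε * (ρ₀ x * u x t ^ 2 + ρ₀ x * u x 0 ^ 2) with hg
    have hgint : Integrable g := by
      apply Integrable.add
      · exact hρint.const_mul _
      · exact ((hu2int t ht).add (hu2int 0 ht0)).const_mul _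
    have hgnn : ∀ x, 0 ≤ g x := by
      intro x
      have := hρnn x
      have h1 : 0 ≤ ρ₀ x * u x t ^ 2 := by positivity
      have h2 : 0 ≤ ρ₀ x * u x 0 ^ 2 := by positivity
      have : 0 ≤ 1 / ε := by positivity
      positivity
    have hpt : ∀ x, |f x| ≤ g x := by
      intro x
      have hρ := hρnn x
      have habs2 : |f x| = ρ₀ x * |u x t - u x 0| := by
        rw [hf, abs_mul, abs_of_nonneg hρ]
      rw [habs2]
      show ρ₀ x * |u x t - u x 0|
          ≤ ε / 2 * ρ₀ x + 1 / ε * (ρ₀ x * u x t ^ 2 + ρ₀ x * u x 0 ^ 2)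
      have key : 2 * ε * (ρ₀ x * |u x t - u x 0|)
          ≤ ε ^ 2 * ρ₀ x + ρ₀ x * (2 * u x t ^ 2 + 2 * u x 0 ^ 2) := by
        nlinarith [sq_abs (u x t - u x 0), sq_nonneg (|u x t - u x 0| - ε), sq_nonneg (u x t + u x 0),
          mul_nonneg hρ (sq_nonneg (|u x t - u x 0| - ε)),
          mul_nonneg hρ (sq_nonneg (u x t + u x 0))]
      rw [← mul_le_mul_iff_right₀ hε]
      have expand : ε * (ε / 2 * ρ₀ x + 1 / ε * (ρ₀ x * u x t ^ 2 + ρ₀ x * u x 0 ^ 2))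
          = ε ^ 2 / 2 * ρ₀ x + (ρ₀ x * u x t ^ 2 + ρ₀ x * u x 0 ^ 2) := by
        field_simp
      rw [expand]
      linarith [key]
    have step1 : C ≤ ∫ y' in Set.Iic y, g y' := by
      apply integral_mono hfi.abs hgint.integrableOn
      intro x; exact hpt x
    have step2 : ∫ y' in Set.Iic y, g y' ≤ ∫ x, g x :=
      setIntegral_le_integral hgint (Filter.Eventually.of_forall hgnn)
    have step3 : ∫ x, g x = ε / 2 * m
        + 1 / ε * ((∫ x, ρ₀ x * u x t ^ 2) + ∫ x, ρ₀ x * u x 0 ^ 2) := by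
      have e1 : Integrable (fun x => ε / 2 * ρ₀ x) := hρint.const_mul _
      have e2 : Integrable (fun x => 1 / ε * (ρ₀ x * u x t ^ 2 + ρ₀ x * u x 0 ^ 2)) :=
        ((hu2int t ht).add (hu2int 0 ht0)).const_mul _
      calc ∫ x, g x
          = ∫ x, (ε / 2 * ρ₀ x + 1 / ε * (ρ₀ x * u x t ^ 2 + ρ₀ x * u x 0 ^ 2)) := rfl
        _ = (∫ x, ε / 2 * ρ₀ x) + ∫ x, 1 / ε * (ρ₀ x * u x t ^ 2 + ρ₀ x * u x 0 ^ 2) :=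
            integral_add e1 e2
        _ = ε / 2 * m
            + 1 / ε * ((∫ x, ρ₀ x * u x t ^ 2) + ∫ x, ρ₀ x * u x 0 ^ 2) := by
            rw [integral_const_mul, integral_const_mul, hm,
              integral_add (hu2int t ht) (hu2int 0 ht0)]
    have step4 : ε / 2 * m + 1 / ε * ((∫ x, ρ₀ x * u x t ^ 2) + ∫ x, ρ₀ x * u x 0 ^ 2)
        ≤ ε * (m / 2) + 4 * E₀ / ε := by
      have h1 := hu2 t ht
      have h2 := hu2 0 ht0
      have hεnn : 0 ≤ 1 / ε := by positivity
      have : 1 / ε * ((∫ x, ρ₀ x * u x t ^ 2) + ∫ x, ρ₀ x * u x 0 ^ 2)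
          ≤ 1 / ε * (4 * E₀) := by
        apply mul_le_mul_of_nonneg_left _ hεnn
        linarith
      have heq : 1 / ε * (4 * E₀) = 4 * E₀ / ε := by ring
      linarith [this, heq ▸ this]
    rw [step3] at step2
    linarith [step1, step2, step4]
  -- simplify the sqrt
  have hsqrt : 2 * Real.sqrt (m / 2 * (4 * E₀)) = 2 * Real.sqrt 2 * Real.sqrt (m * E₀) := by
    have : m / 2 * (4 * E₀) = 2 * (m * E₀) := by ring
    rw [this, Real.sqrt_mul (by norm_num : (0:ℝ) ≤ 2)]
    ring
  rw [hsqrt] at hCbound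
  -- conclude
  have hrepy := hrep y t ht
  have hlog : -(2 * Real.sqrt 2 * Real.sqrt (m * E₀)) ≤ lam * Real.log (J y t) := by
    have : -(2 * Real.sqrt 2 * Real.sqrt (m * E₀)) ≤ ∫ y' in Set.Iic y, f y' := by
      have := neg_abs_le (∫ y' in Set.Iic y, f y')
      linarith [habs, hCbound]
    rw [hrepy]
    exact le_trans this (by linarith)
  have hlog2 : -(2 * Real.sqrt 2 / lam) * Real.sqrt (m * E₀) ≤ Real.log (J y t) := by
    have heq : -(2 * Real.sqrt 2 / lam) * Real.sqrt (m * E₀)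
        = (-(2 * Real.sqrt 2 * Real.sqrt (m * E₀))) / lam := by
      field_simp
    rw [heq, div_le_iff₀ hlam]
    nlinarith [hlog]
  calc Real.exp (-(2 * Real.sqrt 2 / lam) * Real.sqrt (m * E₀))
      ≤ Real.exp (Real.log (J y t)) := Real.exp_le_exp.2 hlog2
    _ = J y t := Real.exp_log (hJpos y t ht)
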